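/- Let k ≥ 0 and r > k. For every partition a = x_1 < x_2 < … < x_N = b and every v ∈ S_h, the nodal values of v satisfy |v^i| ≤ (x_i − a)^{1/2} ‖d_{w,r}v‖_h for each i = 1, …, N, where d_{w,r}v denotes the piecewise discrete weak derivative of v and ‖·‖_h the broken L² norm. -/

import Mathlib

open MeasureTheory Set

noncomputable section

/-- `p` is the discrete weak derivative of order `r` of the weak function
`(v0, vl, vr)` on the interval `(c, d)`: it is a polynomial of degree at most `r`
satisfying `∫ p q = -∫ v0 q' + vr q(d) - vl q(c)` for all polynomials `q` of
degree at most `r`. -/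
def IsWeakDeriv (r : ℕ) (c d : ℝ) (v0 : ℝ → ℝ) (vl vr : ℝ) (p : Polynomial ℝ) : Prop :=
  p.degree ≤ (r : WithBot ℕ) ∧ ∀ q : Polynomial ℝ, q.degree ≤ (r : WithBot ℕ) →
    (∫ t in c..d, p.eval t * q.eval t) =
      -(∫ t in c..d, v0 t * q.derivative.eval t) + vr * q.eval d - vl * q.eval c

/-- `p` is the L²(c,d)-orthogonal projection of `g` onto polynomials of degree at most `l`. -/
def IsL2Proj (l : ℕ) (c d : ℝ) (g : ℝ → ℝ) (p : Polynomial ℝ) : Prop :=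
  p.degree ≤ (l : WithBot ℕ) ∧ ∀ q : Polynomial ℝ, q.degree ≤ (l : WithBot ℕ) →
    (∫ t in c..d, (g t - p.eval t) * q.eval t) = 0

/-- `x 0 = a < x 1 < ⋯ < x (N-1) = b` is a partition of `(a,b)`. -/
def IsPartition (N : ℕ) (a b : ℝ) (x : ℕ → ℝ) : Prop :=
  2 ≤ N ∧ x 0 = a ∧ x (N - 1) = b ∧ ∀ i < N - 1, x i < x (i + 1)

/-- Membership in the weak finite element space `S_h`: on each of the `N - 1` elements the
interior component is a polynomial of degree at most `k`, the nodal values are single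
valued, and the nodal value at the left endpoint vanishes. -/
def MemSh (k N : ℕ) (v0 : ℕ → Polynomial ℝ) (vn : ℕ → ℝ) : Prop :=
  (∀ i < N - 1, (v0 i).degree ≤ (k : WithBot ℕ)) ∧ vn 0 = 0

/-- `D i` is the discrete weak derivative of order `r` of the weak finite element function
`(v0, vn)` on the `i`-th element `(x i, x (i+1))`. -/
def IsWeakDerivFam (r N : ℕ) (x : ℕ → ℝ) (v0 : ℕ → Polynomial ℝ) (vn : ℕ → ℝ)
    (D : ℕ → Polynomial ℝ) : Prop :=
  ∀ i < N - 1, IsWeakDeriv r (x i) (x (i + 1)) (fun t => (v0 i).eval t) (vn i) (vn (i + 1)) (D i)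

/-- `(u0, un)` with discrete weak derivatives `Du` is a weak finite element solution:
it belongs to `S_h` and satisfies
`(a2 d_w u_h, d_w v)_h + (a0 u_h⁰, v⁰) = (f, v⁰)` for all `v ∈ S_h`. -/
def IsWFESol (k r N : ℕ) (x : ℕ → ℝ) (a2 a0 f : ℝ → ℝ)
    (u0 : ℕ → Polynomial ℝ) (un : ℕ → ℝ) (Du : ℕ → Polynomial ℝ) : Prop :=
  MemSh k N u0 un ∧ IsWeakDerivFam r N x u0 un Du ∧
  ∀ (v0 : ℕ → Polynomial ℝ) (vn : ℕ → ℝ) (Dv : ℕ → Polynomial ℝ),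
    MemSh k N v0 vn → IsWeakDerivFam r N x v0 vn Dv →
    ((∑ i ∈ Finset.range (N - 1), ∫ t in x i..x (i + 1), a2 t * (Du i).eval t * (Dv i).eval t)
      + ∑ i ∈ Finset.range (N - 1), ∫ t in x i..x (i + 1), a0 t * (u0 i).eval t * (v0 i).eval t)
      = ∑ i ∈ Finset.range (N - 1), ∫ t in x i..x (i + 1), f t * (v0 i).eval t

lemma interval_CS (c d : ℝ) (hcd : c ≤ d) (p : Polynomial ℝ) :
    (∫ t in c..d, p.eval t) ^ 2 ≤ (d - c) * ∫ t in c..d, (p.eval t) ^ 2 := by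
  rcases eq_or_lt_of_le hcd with h | h
  · simp [← h]
  set A := ∫ t in c..d, p.eval t with hA
  set B := ∫ t in c..d, (p.eval t) ^ 2 with hB
  have hdc : (0:ℝ) < d - c := by linarith
  set m := A / (d - c) with hm
  have h1 : IntervalIntegrable (fun t => (p.eval t)^2) volume c d :=
    (p.continuous.pow 2).intervalIntegrable c d
  have h2 : IntervalIntegrable (fun t => 2 * m * p.eval t) volume c d :=
    (continuous_const.mul p.continuous).intervalIntegrable c d
  have key : (0:ℝ) ≤ ∫ t in c..d, (p.eval t - m) ^ 2 := by
    apply intervalIntegral.integral_nonneg hcd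
    intro t _; positivity
  have expand : (∫ t in c..d, (p.eval t - m) ^ 2)
      = B - 2 * m * A + m ^ 2 * (d - c) := by
    have heq : (fun t => (p.eval t - m) ^ 2)
        = fun t => ((p.eval t)^2 - 2 * m * p.eval t) + m ^ 2 := by
      funext t; ring
    rw [heq, intervalIntegral.integral_add (h1.sub h2) (intervalIntegrable_const),
      intervalIntegral.integral_sub h1 h2, intervalIntegral.integral_const_mul,
      intervalIntegral.integral_const]
    simp [smul_eq_mul]; ring
  rw [expand] at key
  have hmA : m * (d - c) = A := by rw [hm]; exact div_mul_cancel₀ A hdc.ne'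
  nlinarith [key, hdc, sq_nonneg (A - m * (d-c))]

/-- Lemma 3.2, nodal weak embedding inequality. Let `k ≥ 0` and `r > k`.
For every partition `a = x 0 < ⋯ < x (N-1) = b` and every `v ∈ S_h` with piecewise
discrete weak derivative `D`, the nodal values satisfy
`|vⁱ| ≤ (x_i - a)^{1/2} ‖d_{w,r} v‖_h` for each node. -/
theorem nodal_weak_embedding (k r : ℕ) (hkr : k < r) (a b : ℝ) (hab : a < b)
    (N : ℕ) (x : ℕ → ℝ) (hpart : IsPartition N a b x)
    (v0 : ℕ → Polynomial ℝ) (vn : ℕ → ℝ) (D : ℕ → Polynomial ℝ)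
    (hv : MemSh k N v0 vn) (hD : IsWeakDerivFam r N x v0 vn D) :
    ∀ i < N, |vn i| ≤ Real.sqrt (x i - a) *
      Real.sqrt (∑ j ∈ Finset.range (N - 1), ∫ t in x j..x (j + 1), ((D j).eval t) ^ 2) := by
  obtain ⟨hN, hx0, hxN, hmono⟩ := hpart
  intro i hi
  have hiN : i ≤ N - 1 := Nat.le_pred_of_lt hi
  have hjN : ∀ j ∈ Finset.range i, j < N - 1 := fun j hj =>
    lt_of_lt_of_le (Finset.mem_range.mp hj) hiN
  -- telescoping identity
  have hij : ∀ j < N - 1, (∫ t in x j..x (j+1), (D j).eval t) = vn (j+1) - vn j := by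
    intro j hj
    have h1 := (hD j hj).2 1 (by simp)
    simpa using h1
  have htel : vn i = ∑ j ∈ Finset.range i, ∫ t in x j..x (j+1), (D j).eval t := by
    rw [Finset.sum_congr rfl (fun j hj => hij j (hjN j hj)), Finset.sum_range_sub vn i,
      hv.2, sub_zero]
  set I : ℕ → ℝ := fun j => ∫ t in x j..x (j+1), ((D j).eval t)^2 with hI
  set h : ℕ → ℝ := fun j => x (j+1) - x j with hh
  have hInn : ∀ j < N - 1, 0 ≤ I j := fun j hj =>
    intervalIntegral.integral_nonneg (hmono j hj).le (fun t _ => sq_nonneg _)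
  have hhnn : ∀ j < N - 1, 0 ≤ h j := fun j hj => by
    have := hmono j hj; simp [hh]; linarith
  -- per-element bound
  have hbound : ∀ j ∈ Finset.range i,
      |∫ t in x j..x (j+1), (D j).eval t| ≤ Real.sqrt (h j * I j) := by
    intro j hj
    have hj' := hjN j hj
    have := interval_CS (x j) (x (j+1)) (hmono j hj').le (D j)
    calc |∫ t in x j..x (j+1), (D j).eval t|
        = Real.sqrt ((∫ t in x j..x (j+1), (D j).eval t)^2) := (Real.sqrt_sq_eq_abs _).symm
      _ ≤ Real.sqrt (h j * I j) := Real.sqrt_le_sqrt this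
  -- Cauchy-Schwarz on the sum
  have hCS : (∑ j ∈ Finset.range i, Real.sqrt (h j * I j)) ^ 2
      ≤ (∑ j ∈ Finset.range i, h j) * ∑ j ∈ Finset.range i, I j := by
    apply Finset.sum_sq_le_sum_mul_sum_of_sq_eq_mul
    · exact fun j hj => hhnn j (hjN j hj)
    · exact fun j hj => hInn j (hjN j hj)
    · intro j hj
      exact Real.sq_sqrt (mul_nonneg (hhnn j (hjN j hj)) (hInn j (hjN j hj)))
  have hsumh : ∑ j ∈ Finset.range i, h j = x i - a := by
    rw [hh]; rw [Finset.sum_range_sub x i, hx0]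
  set S := ∑ j ∈ Finset.range (N - 1), I j with hS
  have hPS : ∑ j ∈ Finset.range i, I j ≤ S := by
    apply Finset.sum_le_sum_of_subset_of_nonneg
    · exact Finset.range_subset_range.mpr hiN
    · intro j hj _
      exact hInn j (Finset.mem_range.mp hj)
  have hxa : 0 ≤ x i - a := by
    have : ∀ j ∈ Finset.range i, 0 ≤ h j := fun j hj => hhnn j (hjN j hj)
    have := Finset.sum_nonneg this
    rwa [hsumh] at this
  have hvni : |vn i| ≤ ∑ j ∈ Finset.range i, Real.sqrt (h j * I j) := by
    rw [htel]
    exact le_trans (Finset.abs_sum_le_sum_abs _ _) (Finset.sum_le_sum hbound)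
  have hsq : |vn i| ^ 2 ≤ (x i - a) * S := by
    have h0 : 0 ≤ ∑ j ∈ Finset.range i, Real.sqrt (h j * I j) :=
      Finset.sum_nonneg fun j _ => Real.sqrt_nonneg _
    calc |vn i| ^ 2 ≤ (∑ j ∈ Finset.range i, Real.sqrt (h j * I j)) ^ 2 := by
          apply pow_le_pow_left₀ (abs_nonneg _) hvni
      _ ≤ (∑ j ∈ Finset.range i, h j) * ∑ j ∈ Finset.range i, I j := hCS
      _ ≤ (x i - a) * S := by rw [hsumh]; exact mul_le_mul_of_nonneg_left hPS hxa
  calc |vn i| = Real.sqrt (|vn i| ^ 2) := by rw [Real.sqrt_sq (abs_nonneg _)]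
    _ ≤ Real.sqrt ((x i - a) * S) := Real.sqrt_le_sqrt hsq
    _ = Real.sqrt (x i - a) * Real.sqrt S := Real.sqrt_mul hxa S
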